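/- Let A = Σ_{n≥0} αₙXⁿ be a rational power series over a field K, written as a reduced fraction f/g with f, g coprime polynomials and g(0) ≠ 0. Then the K-vector space spanned by A, τ(A), τ²(A), … (where τ is the shift operator) has finite dimension equal to max(1 + deg f, deg g). Conversely, a power series A is rational if and only if the span of {τⁿ(A) : n ≥ 0} is finite-dimensional. -/

import Mathlib

open PowerSeries

/-- The shift operator `τ(Σ αₙXⁿ) = Σ α_{n+1}Xⁿ`. -/
noncomputable def shift {K : Type*} [Field K] (A : PowerSeries K) : PowerSeries K :=
  PowerSeries.mk fun n => coeff (n + 1) A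

section Aux
variable {K : Type*} [Field K]

lemma coeff_shift_iterate (A : PowerSeries K) (n m : ℕ) :
    coeff m (shift^[n] A) = coeff (m + n) A := by
  induction n generalizing A m with
  | zero => simp
  | succ k ih =>
      rw [Function.iterate_succ_apply, ih, shift, coeff_mk]
      ring_nf

lemma X_pow_mul_shift_iterate (A : PowerSeries K) (n : ℕ) :
    (X : PowerSeries K) ^ n * shift^[n] A = A - ((trunc n A : Polynomial K) : PowerSeries K) := by
  ext m
  rw [map_sub, Polynomial.coeff_coe, coeff_trunc]
  rcases le_or_gt n m with h | h
  · obtain ⟨k, rfl⟩ := Nat.exists_eq_add_of_le h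
    rw [add_comm n k, coeff_X_pow_mul, coeff_shift_iterate, if_neg (by omega)]
    ring
  · rw [coeff_X_pow_mul', if_neg (by omega), if_pos h]
    ring

noncomputable def pp (c : ℕ → K) (m : ℕ) : Polynomial K :=
  ∑ n ∈ Finset.range (m + 1), Polynomial.C (c n) * Polynomial.X ^ (m - n)

noncomputable def rr (A : PowerSeries K) (c : ℕ → K) (m : ℕ) : Polynomial K :=
  ∑ n ∈ Finset.range (m + 1), Polynomial.C (c n) * (Polynomial.X ^ (m - n) * trunc n A)

lemma pp_coeff_zero (c : ℕ → K) (m : ℕ) : (pp c m).coeff 0 = c m := by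
  rw [pp, Polynomial.finset_sum_coeff]
  rw [Finset.sum_eq_single m]
  · simp
  · intro n hn hne
    have : m - n ≠ 0 := by simp at hn; omega
    simp only [Polynomial.coeff_C_mul, Polynomial.coeff_X_pow]
    rw [if_neg (by omega)]
    ring
  · intro h; simp at h

lemma pp_degree_le (c : ℕ → K) (m : ℕ) : (pp c m).degree ≤ m := by
  refine (Polynomial.degree_sum_le _ _).trans ?_
  rw [Finset.sup_le_iff]
  intro n hn
  rw [← Polynomial.smul_eq_C_mul]
  refine (Polynomial.degree_smul_le _ _).trans ?_
  refine (Polynomial.degree_X_pow_le _).trans ?_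
  exact_mod_cast Nat.cast_le.2 (Nat.sub_le m n)

lemma rr_degree_lt (A : PowerSeries K) (c : ℕ → K) (m : ℕ) : (rr A c m).degree < m := by
  refine (Polynomial.degree_sum_le _ _).trans_lt ?_
  rw [Finset.sup_lt_iff (by exact_mod_cast WithBot.bot_lt_coe m)]
  intro n hn
  simp only [Finset.mem_range] at hn
  rw [← Polynomial.smul_eq_C_mul]
  refine (Polynomial.degree_smul_le _ _).trans_lt ?_
  refine (Polynomial.degree_mul_le _ _).trans_lt ?_
  rcases eq_or_ne (trunc n A) 0 with h | h
  · simp [h]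
  · have h1 : (Polynomial.X ^ (m - n) : Polynomial K).degree = ((m - n : ℕ) : WithBot ℕ) :=
      Polynomial.degree_X_pow _
    have h2 : (trunc n A).degree < (n : WithBot ℕ) := degree_trunc_lt A n
    have hn0 : n ≠ 0 := by
      rintro rfl
      exact h (by ext k; simp [coeff_trunc])
    rw [h1, Polynomial.degree_eq_natDegree h] at *
    have h2' : (trunc n A).natDegree < n := by exact_mod_cast h2
    exact_mod_cast (by omega : (m - n) + (trunc n A).natDegree < m)

lemma mul_pp (A : PowerSeries K) (c : ℕ → K) (m : ℕ)
    (h : ∑ n ∈ Finset.range (m + 1), c n • shift^[n] A = 0) :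
    A * ((pp c m : Polynomial K) : PowerSeries K) = ((rr A c m : Polynomial K) : PowerSeries K) := by
  have hp : ((pp c m : Polynomial K) : PowerSeries K)
      = ∑ n ∈ Finset.range (m + 1), PowerSeries.C (c n) * X ^ (m - n) := by
    rw [pp, ← Polynomial.coeToPowerSeries.ringHom_apply, map_sum]
    refine Finset.sum_congr rfl fun n _ => ?_
    simp [Polynomial.coeToPowerSeries.ringHom_apply, Polynomial.coe_mul, Polynomial.coe_pow,
      Polynomial.coe_C, Polynomial.coe_X]
  have hr : ((rr A c m : Polynomial K) : PowerSeries K)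
      = ∑ n ∈ Finset.range (m + 1), PowerSeries.C (c n) *
          (X ^ (m - n) * ((trunc n A : Polynomial K) : PowerSeries K)) := by
    rw [rr, ← Polynomial.coeToPowerSeries.ringHom_apply, map_sum]
    refine Finset.sum_congr rfl fun n _ => ?_
    simp [Polynomial.coeToPowerSeries.ringHom_apply, Polynomial.coe_mul, Polynomial.coe_pow,
      Polynomial.coe_C, Polynomial.coe_X]
  rw [hp, hr, Finset.mul_sum]
  have key : ∀ n ∈ Finset.range (m + 1),
      A * (PowerSeries.C (c n) * X ^ (m - n))
        = c n • ((X : PowerSeries K) ^ m * shift^[n] A)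
          + PowerSeries.C (c n) * (X ^ (m - n) * ((trunc n A : Polynomial K) : PowerSeries K)) := by
    intro n hn
    simp only [Finset.mem_range] at hn
    have hX : (X : PowerSeries K) ^ (m - n) * (X ^ n * shift^[n] A)
        = X ^ m * shift^[n] A := by
      rw [← mul_assoc, ← pow_add]
      congr 2
      omega
    have := X_pow_mul_shift_iterate A n
    have hA : A = X ^ n * shift^[n] A + ((trunc n A : Polynomial K) : PowerSeries K) := by
      rw [this]; ring
    have step : A * (PowerSeries.C (c n) * X ^ (m - n))
        = PowerSeries.C (c n) * (X ^ (m - n) * (X ^ n * shift^[n] A))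
          + PowerSeries.C (c n) * (X ^ (m - n) * ((trunc n A : Polynomial K) : PowerSeries K)) := by
      conv_lhs => rw [hA]
      ring
    rw [step, hX, PowerSeries.smul_eq_C_mul]
  rw [Finset.sum_congr rfl key, Finset.sum_add_distrib]
  have : ∑ n ∈ Finset.range (m + 1), c n • ((X : PowerSeries K) ^ m * shift^[n] A)
      = X ^ m * ∑ n ∈ Finset.range (m + 1), c n • shift^[n] A := by
    rw [Finset.mul_sum]
    exact Finset.sum_congr rfl fun n _ => (mul_smul_comm _ _ _).symm
  rw [this, h, mul_zero, zero_add]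

/-- vanishing of high coefficients of `τⁿA * g`. -/
lemma coeff_shift_mul_eq_zero (A : PowerSeries K) (f g : Polynomial K)
    (hA : A * (g : PowerSeries K) = (f : PowerSeries K)) (n m : ℕ)
    (hm : max (f.natDegree + 1) g.natDegree ≤ m) :
    coeff m (shift^[n] A * (g : PowerSeries K)) = 0 := by
  have h1 : coeff (m + n) ((X : PowerSeries K) ^ n * (shift^[n] A * (g : PowerSeries K)))
      = coeff m (shift^[n] A * (g : PowerSeries K)) := by
    exact coeff_X_pow_mul (shift^[n] A * (g : PowerSeries K)) n m
  rw [← h1, ← mul_assoc, X_pow_mul_shift_iterate, sub_mul, hA, ← Polynomial.coe_mul, map_sub,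
    Polynomial.coeff_coe, Polynomial.coeff_coe]
  have hf : f.coeff (m + n) = 0 :=
    Polynomial.coeff_eq_zero_of_natDegree_lt (by omega)
  have hg : (trunc n A * g).coeff (m + n) = 0 := by
    rcases eq_or_ne (trunc n A) 0 with h | h
    · simp [h]
    · refine Polynomial.coeff_eq_zero_of_natDegree_lt ?_
      have h2 : (trunc n A).natDegree < n := by
        have := degree_trunc_lt A n
        rw [Polynomial.degree_eq_natDegree h] at this
        exact_mod_cast this
      refine (Polynomial.natDegree_mul_le).trans_lt ?_
      omega
  rw [hf, hg]
  ring

noncomputable def ιL : Polynomial K →ₗ[K] PowerSeries K where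
  toFun p := (p : PowerSeries K)
  map_add' p q := by
    ext n
    simp [Polynomial.coeff_coe]
  map_smul' c p := by
    ext n
    simp [Polynomial.coeff_coe]

lemma shifts_ub (A : PowerSeries K) (f g : Polynomial K) (hg0 : g.coeff 0 ≠ 0)
    (hA : A * (g : PowerSeries K) = (f : PowerSeries K)) :
    FiniteDimensional K ↥(Submodule.span K (Set.range fun n => shift^[n] A)) ∧
      Module.finrank K ↥(Submodule.span K (Set.range fun n => shift^[n] A)) ≤
        max (f.natDegree + 1) g.natDegree := by
  set d := max (f.natDegree + 1) g.natDegree with hd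
  have hgne : (g : PowerSeries K) ≠ 0 := by
    intro h
    apply hg0
    have := congrArg (coeff 0) h
    simpa [Polynomial.coeff_coe] using this
  haveI : Module.Finite K (Polynomial.degreeLT K d) :=
    Module.Finite.equiv (Polynomial.degreeLTEquiv K d).symm
  set Φ : PowerSeries K →ₗ[K] PowerSeries K := LinearMap.mulRight K (g : PowerSeries K) with hΦ
  have hΦinj : Function.Injective Φ := by
    intro x y hxy
    simp only [hΦ, LinearMap.mulRight_apply] at hxy
    exact mul_right_cancel₀ hgne hxy
  set P : Submodule K (PowerSeries K) := (Polynomial.degreeLT K d).map (ιL) with hP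
  have hPfd : FiniteDimensional K P := by
    haveI : Module.Finite K (Polynomial.degreeLT K d) :=
      Module.Finite.equiv (Polynomial.degreeLTEquiv K d).symm
    exact Module.Finite.map _ _
  set S := Submodule.span K (Set.range fun n => shift^[n] A) with hS
  have hmap : Submodule.map Φ S ≤ P := by
    rw [hS, Submodule.map_span, Submodule.span_le]
    rintro x ⟨y, ⟨n, rfl⟩, rfl⟩
    have hv : ∀ m, d ≤ m → coeff m (shift^[n] A * (g : PowerSeries K)) = 0 := fun m hm =>
      coeff_shift_mul_eq_zero A f g hA n m hm
    have heq : (shift^[n] A * (g : PowerSeries K)) =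
        ((trunc d (shift^[n] A * (g : PowerSeries K)) : Polynomial K) : PowerSeries K) := by
      ext k
      rw [Polynomial.coeff_coe, coeff_trunc]
      split
      · rfl
      · exact hv k (by omega)
    refine ⟨trunc d (shift^[n] A * (g : PowerSeries K)), ?_, ?_⟩
    · exact Polynomial.mem_degreeLT.2 (degree_trunc_lt _ _)
    · simp only [hΦ, LinearMap.mulRight_apply, ιL, LinearMap.coe_mk, AddHom.coe_mk]
      exact heq.symm
  have e : S ≃ₗ[K] Submodule.map Φ S := Submodule.equivMapOfInjective Φ hΦinj S
  have hfd2 : FiniteDimensional K (Submodule.map Φ S) :=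
    Submodule.finiteDimensional_of_le hmap
  have hfd : FiniteDimensional K S := Module.Finite.equiv e.symm
  refine ⟨hfd, ?_⟩
  have h1 : Module.finrank K S = Module.finrank K (Submodule.map Φ S) := e.finrank_eq
  have h2 : Module.finrank K (Submodule.map Φ S) ≤ Module.finrank K P :=
    Submodule.finrank_mono hmap
  have h3 : Module.finrank K P ≤ Module.finrank K (Polynomial.degreeLT K d) :=
    Submodule.finrank_map_le _ _
  have h4 : Module.finrank K (Polynomial.degreeLT K d) = d := by
    rw [(Polynomial.degreeLTEquiv K d).finrank_eq]
    simp
  omega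

lemma shifts_li (A : PowerSeries K) (f g : Polynomial K) (hco : IsCoprime f g)
    (hg0 : g.coeff 0 ≠ 0) (hA : A * (g : PowerSeries K) = (f : PowerSeries K)) (hA0 : A ≠ 0) :
    LinearIndependent K
      (fun n : Fin (max (f.natDegree + 1) g.natDegree) => shift^[n.1] A) := by
  classical
  set d := max (f.natDegree + 1) g.natDegree with hd
  have hgne : (g : PowerSeries K) ≠ 0 := by
    intro h
    apply hg0
    simpa [Polynomial.coeff_coe] using congrArg (coeff 0) h
  have hf0 : f ≠ 0 := by
    intro h
    apply hA0
    rw [h, Polynomial.coe_zero] at hA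
    exact (mul_eq_zero.1 hA).resolve_right hgne
  by_contra hli
  rw [Fintype.not_linearIndependent_iff] at hli
  obtain ⟨cc, hsum, i, hi⟩ := hli
  set c : ℕ → K := fun n => if h : n < d then cc ⟨n, h⟩ else 0 with hc
  set s := (Finset.range d).filter (fun n => c n ≠ 0) with hs
  have hins : (i : ℕ) ∈ s := by
    simp only [hs, Finset.mem_filter, Finset.mem_range]
    exact ⟨i.2, by simp [hc, i.2, hi]⟩
  have hsne : s.Nonempty := ⟨i, hins⟩
  set m := s.max' hsne with hm
  have hmmem := s.max'_mem hsne
  have hmd : m < d := Finset.mem_range.1 (Finset.mem_filter.1 hmmem).1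
  have hcm : c m ≠ 0 := (Finset.mem_filter.1 hmmem).2
  have hdep : ∑ n ∈ Finset.range (m + 1), c n • shift^[n] A = 0 := by
    have e1 : ∑ n ∈ Finset.range (m + 1), c n • shift^[n] A
        = ∑ n ∈ Finset.range d, c n • shift^[n] A := by
      refine Finset.sum_subset (Finset.range_subset_range.2 (by omega)) ?_
      intro x hx hnx
      have hxc : c x = 0 := by
        by_contra hne
        have hxs : x ∈ s := Finset.mem_filter.2 ⟨hx, hne⟩
        have := s.le_max' x hxs
        simp only [Finset.mem_range] at hx hnx
        omega
      rw [hxc, zero_smul]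
    rw [e1, ← hsum]
    rw [← Fin.sum_univ_eq_sum_range (fun n => c n • shift^[n] A) d]
    refine Finset.sum_congr rfl fun j _ => ?_
    simp [hc, j.2]
  have hmul := mul_pp A c m hdep
  have hp0 : (pp c m).coeff 0 = c m := pp_coeff_zero c m
  have hpne : pp c m ≠ 0 := fun h => hcm (by rw [← hp0, h, Polynomial.coeff_zero])
  have key : f * pp c m = rr A c m * g := by
    have h1 : ((f * pp c m : Polynomial K) : PowerSeries K)
        = ((rr A c m * g : Polynomial K) : PowerSeries K) := by
      rw [Polynomial.coe_mul, Polynomial.coe_mul, ← hA, ← hmul]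
      ring
    exact_mod_cast h1
  have hgdvd : g ∣ pp c m := by
    refine (hco.symm).dvd_of_dvd_mul_left (y := f) ?_
    rw [key]
    exact Dvd.intro_left _ rfl
  have hfdvd : f ∣ rr A c m := by
    refine hco.dvd_of_dvd_mul_right (z := g) ?_
    rw [← key]
    exact Dvd.intro _ rfl
  have hrne : rr A c m ≠ 0 := by
    intro h
    rw [h, zero_mul] at key
    exact mul_ne_zero hf0 hpne key
  have h5 : g.natDegree ≤ m := by
    have := (Polynomial.degree_le_of_dvd hgdvd hpne).trans (pp_degree_le c m)
    exact Polynomial.natDegree_le_iff_degree_le.2 this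
  have h6 : f.natDegree < m := by
    have := (Polynomial.degree_le_of_dvd hfdvd hrne).trans_lt (rr_degree_lt A c m)
    exact (Polynomial.natDegree_lt_iff_degree_lt hf0).2 this
  omega

lemma shifts_rat (A : PowerSeries K)
    (hfd : FiniteDimensional K ↥(Submodule.span K (Set.range fun n => shift^[n] A))) :
    ∃ f g : Polynomial K, g.coeff 0 ≠ 0 ∧
      A * (g : PowerSeries K) = (f : PowerSeries K) := by
  classical
  set S := Submodule.span K (Set.range fun n => shift^[n] A) with hS
  have hv : ∀ n : ℕ, shift^[n] A ∈ S := fun n => Submodule.subset_span ⟨n, rfl⟩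
  have hnli : ¬ LinearIndependent K (fun n : ℕ => (⟨shift^[n] A, hv n⟩ : S)) :=
    Module.Finite.not_linearIndependent_of_infinite _
  rw [not_linearIndependent_iff] at hnli
  obtain ⟨s, cc, hsum, i, his, hine⟩ := hnli
  have hsum' : ∑ n ∈ s, cc n • shift^[n] A = 0 := by
    have h0 := congrArg (Subtype.val) hsum
    simpa using h0
  set c : ℕ → K := fun n => if n ∈ s then cc n else 0 with hc
  set t := s.filter (fun n => cc n ≠ 0) with ht
  have hit : i ∈ t := Finset.mem_filter.2 ⟨his, hine⟩
  have htne : t.Nonempty := ⟨i, hit⟩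
  set m := t.max' htne with hm
  have hmmem := t.max'_mem htne
  have hcm : c m ≠ 0 := by
    have h1 := (Finset.mem_filter.1 hmmem).2
    have h2 := (Finset.mem_filter.1 hmmem).1
    simp [hc, hm, h2, h1]
  have hdep : ∑ n ∈ Finset.range (m + 1), c n • shift^[n] A = 0 := by
    have e2 : ∑ n ∈ t, c n • shift^[n] A
        = ∑ n ∈ Finset.range (m + 1), c n • shift^[n] A := by
      refine Finset.sum_subset ?_ ?_
      · intro x hx
        exact Finset.mem_range.2 (by have := t.le_max' x hx; omega)
      · intro x _ hnx
        have hxc : c x = 0 := by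
          simp only [hc]
          split
          · rename_i hxs
            by_contra hne
            exact hnx (Finset.mem_filter.2 ⟨hxs, hne⟩)
          · rfl
        rw [hxc, zero_smul]
    have e1 : ∑ n ∈ t, c n • shift^[n] A = ∑ n ∈ s, cc n • shift^[n] A := by
      rw [ht]
      rw [Finset.sum_filter]
      refine Finset.sum_congr rfl fun x hxs => ?_
      by_cases hx : cc x = 0
      · simp [hx, hc]
      · simp [hx, hc, hxs]
    rw [← e2, e1, hsum']
  refine ⟨rr A c m, pp c m, ?_, mul_pp A c m hdep⟩
  rw [pp_coeff_zero]
  exact hcm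


end Aux

/-- If `A = f/g` is a rational power series written as a reduced fraction (`f, g` coprime
polynomials, `g(0) ≠ 0`), then the span of the shifts `τⁿ(A)` is finite-dimensional of
dimension `max(1 + deg f, deg g)`; conversely, `A` is rational if and only if the span of
its shifts is finite-dimensional. -/
theorem rational_iff_shifts_span_finiteDimensional {K : Type*} [Field K] (A : PowerSeries K) :
    (∀ f g : Polynomial K, IsCoprime f g → g.coeff 0 ≠ 0 →
      A * (g : PowerSeries K) = (f : PowerSeries K) →
      FiniteDimensional K ↥(Submodule.span K (Set.range fun n => shift^[n] A)) ∧
      (Module.finrank K ↥(Submodule.span K (Set.range fun n => shift^[n] A)) : WithBot ℕ) =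
        max (1 + f.degree) g.degree) ∧
    ((∃ f g : Polynomial K, g.coeff 0 ≠ 0 ∧ A * (g : PowerSeries K) = (f : PowerSeries K)) ↔
      FiniteDimensional K ↥(Submodule.span K (Set.range fun n => shift^[n] A))) := by
  constructor
  · intro f g hco hg0 hA
    obtain ⟨hfd, hle⟩ := shifts_ub A f g hg0 hA
    refine ⟨hfd, ?_⟩
    by_cases hA0 : A = 0
    · subst hA0
      have hf : f = 0 := by
        rw [zero_mul] at hA
        exact Polynomial.coe_eq_zero_iff.1 hA.symm
      have hgu : IsUnit g := isCoprime_zero_left.1 (hf ▸ hco)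
      have hdg : g.degree = 0 := Polynomial.degree_eq_zero_of_isUnit hgu
      have hsh : (fun n : ℕ => shift^[n] (0 : PowerSeries K)) = fun _ => (0 : PowerSeries K) :=
        funext fun n => Function.iterate_fixed (by ext k; simp [shift]) n
      rw [hsh, hf, hdg, Polynomial.degree_zero]
      rw [Set.range_const, Submodule.span_zero_singleton]
      rw [finrank_bot]
      simp
    · have hg0' : g ≠ 0 := fun h => hg0 (by simp [h])
      have hf0 : f ≠ 0 := by
        intro h
        apply hA0
        rw [h, Polynomial.coe_zero] at hA
        refine (mul_eq_zero.1 hA).resolve_right fun hg => hg0 ?_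
        simpa [Polynomial.coeff_coe] using congrArg (coeff 0) hg
      set d := max (f.natDegree + 1) g.natDegree with hd
      set S := Submodule.span K (Set.range fun n => shift^[n] A) with hS
      have li := shifts_li A f g hco hg0 hA hA0
      have hmem : ∀ n : Fin d, shift^[n.1] A ∈ S := fun n => Submodule.subset_span ⟨n.1, rfl⟩
      have li' : LinearIndependent K (fun n : Fin d => (⟨shift^[n.1] A, hmem n⟩ : S)) :=
        LinearIndependent.of_comp S.subtype li
      have hge := li'.fintype_card_le_finrank
      rw [Fintype.card_fin] at hge
      have heq : Module.finrank K S = d := le_antisymm hle hge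
      have hdd : d = max (1 + f.natDegree) g.natDegree := by omega
      rw [heq, Polynomial.degree_eq_natDegree hf0, Polynomial.degree_eq_natDegree hg0', hdd]
      rfl
  · constructor
    · rintro ⟨f, g, hg0, hA⟩
      exact (shifts_ub A f g hg0 hA).1
    · exact shifts_rat A
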